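/- Let η be a symmetric nondegenerate N×N complex matrix and let K be a hamiltonian operator whose constant term vanishes (K_0 = 0 in the expansion K = Σ_{i≥0} K_i ∂_x^i) and whose coefficients do not depend on u^1 (∂K/∂u^1 = 0, i.e. all coefficients are annihilated by ∂/∂u^1). Let ḡ_μ ∈ Λ̂_N^{[0]}, 1 ≤ μ ≤ N, be local functionals with ∂ḡ_μ/∂u^1 = ∫ η_{μν}u^ν dx, and let 𝒬 ∈ Â_N^{[−2]} be a differential polynomial such that ∂𝒬/∂u^1 is a constant. Then the differential polynomials 𝒬^α := η^{αμ}∂_x{𝒬, ḡ_μ}_K satisfy ∂𝒬^α/∂u^1 = 0 for every α. -/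

import Mathlib

/-!
Common formal framework for the theory of differential polynomials, local
functionals and tau-structures, following Buryak–Dubrovin–Guéré–Rossi.

Variables of the algebra of differential polynomials: `Sum.inl (α, i)` stands
for `u^α_i` (with `u^α = u^α_0`) and `Sum.inr ()` stands for `ε`.  The paper's
index `1` (the unit direction) corresponds to `(0 : Fin N)` here.
-/

/-- The variables of the algebra of differential polynomials. -/
abbrev DVar (N : ℕ) : Type := (Fin N × ℕ) ⊕ Unit

/-- The ring `Â_N` of (extended) differential polynomials, realized inside the
ring of formal power series in the variables `u^α_i` and `ε`. -/
abbrev DP (N : ℕ) : Type := MvPowerSeries (DVar N) ℂ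

namespace DP

variable {N : ℕ}

/-- Coefficient of a monomial. -/
noncomputable def co (f : DP N) (m : DVar N →₀ ℕ) : ℂ :=
  MvPowerSeries.coeff (R := ℂ) m f

/-- Build a power series from its coefficients. -/
def ofCo (F : (DVar N →₀ ℕ) → ℂ) : DP N := F

/-- The variable `u^α_i`. -/
noncomputable def uv (α : Fin N) (i : ℕ) : DP N :=
  MvPowerSeries.X (Sum.inl (α, i))

/-- The variable `ε`. -/
noncomputable def eps : DP N := MvPowerSeries.X (Sum.inr ())

/-- The partial derivative `∂/∂v` with respect to one of the variables. -/
noncomputable def pd (v : DVar N) (f : DP N) : DP N :=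
  ofCo fun m => ((m v : ℂ) + 1) * co f (m + Finsupp.single v 1)

/-- The spatial derivative `∂_x = Σ_{α,i} u^α_{i+1} ∂/∂u^α_i`. -/
noncomputable def dx (f : DP N) : DP N :=
  ofCo fun m =>
    ∑ v ∈ m.support,
      (match v with
        | Sum.inl (α, i + 1) =>
            co (pd (Sum.inl (α, i)) f) (m - Finsupp.single (Sum.inl (α, i + 1)) 1)
        | _ => (0 : ℂ))

/-- The variational derivative `δ/δu^μ = Σ_{i≥0} (−∂_x)^i ∘ ∂/∂u^μ_i`. -/
noncomputable def vd (μ : Fin N) (f : DP N) : DP N :=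
  ofCo fun m => ∑ᶠ i : ℕ, ((-1 : ℂ) ^ i) * co (dx^[i] (pd (Sum.inl (μ, i)) f)) m

/-- The weighted degree of a monomial: `deg u^α_i = i`, `deg ε = −1`. -/
noncomputable def wdeg (m : DVar N →₀ ℕ) : ℤ :=
  ∑ v ∈ m.support,
    (match v with
      | Sum.inl (_, i) => (i : ℤ)
      | Sum.inr _ => (-1 : ℤ)) * (m v : ℤ)

/-- Degree-`k` homogeneity (membership in `Â_N^{[k]}`). -/
def IsHomog (k : ℤ) (f : DP N) : Prop :=
  ∀ m, co f m ≠ 0 → wdeg m = k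

/-- Being a constant, i.e. an element of `ℂ[[ε]]`. -/
def IsConst (f : DP N) : Prop :=
  ∀ m, co f m ≠ 0 → ∀ v ∈ m.support, v = Sum.inr ()

/-- Vanishing of the evaluation at `u^*_* = 0`. -/
def VanishAtU0 (f : DP N) : Prop :=
  ∀ k : ℕ, co f (Finsupp.single (Sum.inr ()) k) = 0

/-- Being a genuine differential polynomial: in each ε-degree at most `e`,
polynomiality (bounded degree, boundedly many variables) in the jet
variables `u^α_i`, `i ≥ 1`. -/
def IsDiffPoly (f : DP N) : Prop :=
  ∀ e : ℕ, ∃ D : ℕ, ∀ m, co f m ≠ 0 → m (Sum.inr ()) ≤ e →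
    ((∑ v ∈ m.support,
        (match v with
          | Sum.inl (_, _ + 1) => m v
          | _ => 0)) ≤ D) ∧
      ∀ (α : Fin N) (i : ℕ), D < i → m (Sum.inl (α, i)) = 0

/-- The submodule of constants `ℂ[[ε]] ⊆ Â_N`. -/
noncomputable def constSub (N : ℕ) : Submodule ℂ (DP N) where
  carrier := {f | IsConst f}
  add_mem' := by
    intro f g hf hg m hm
    have hco : co (f + g) m = co f m + co g m := map_add _ _ _
    by_cases h1 : co f m = 0
    · have h2 : co g m ≠ 0 := by
        intro h2; exact hm (by rw [hco, h1, h2, add_zero])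
      exact hg m h2
    · exact hf m h1
  zero_mem' := by
    intro m hm
    exact (hm (map_zero (MvPowerSeries.coeff (R := ℂ) m))).elim
  smul_mem' := by
    intro c f hf m hm
    have hne : co f m ≠ 0 := by
      intro h
      apply hm
      have hsm : co (c • f) m = c * co f m := by
        simp [co]
      rw [hsm, h, mul_zero]
    exact hf m hne

/-- The submodule `ℂ[[ε]] + ∂_x(Â_N)` by which one quotients to get local
functionals. -/
noncomputable def lfSub (N : ℕ) : Submodule ℂ (DP N) :=
  constSub N ⊔ Submodule.span ℂ (Set.range (dx : DP N → DP N))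

/-- The space `Λ̂_N` of local functionals. -/
abbrev LF (N : ℕ) := DP N ⧸ lfSub N

/-- The projection `f ↦ ∫ f dx`. -/
noncomputable def intg : DP N →ₗ[ℂ] LF N := (lfSub N).mkQ

/-- A choice of density for a local functional. -/
noncomputable def rep (h : LF N) : DP N :=
  (Submodule.Quotient.mk_surjective (lfSub N) h).choose

/-- The variational derivative `δ/δu^μ` of a local functional. -/
noncomputable def vdQ (μ : Fin N) (h : LF N) : DP N := vd μ (rep h)

/-- The partial derivative `∂/∂v` of a local functional. -/
noncomputable def pdQ (v : DVar N) (h : LF N) : LF N := intg (pd v (rep h))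

/-- The degree-`k` local functionals `Λ̂_N^{[k]}`. -/
noncomputable def LFHomog (N : ℕ) (k : ℤ) : Set (LF N) :=
  intg '' {f : DP N | IsHomog k f ∧ IsDiffPoly f}

/-- The operator `K = η ∂_x` applied to a tuple of differential polynomials. -/
noncomputable def etaAp (η : Matrix (Fin N) (Fin N) ℂ) (α : Fin N)
    (g : Fin N → DP N) : DP N :=
  ∑ ν : Fin N, η α ν • dx (g ν)

/-- The bracket `{f̄, ḡ}_{η∂_x}` of local functionals. -/
noncomputable def lfbEta (η : Matrix (Fin N) (Fin N) ℂ) (f g : LF N) : LF N :=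
  intg (∑ μ : Fin N, vdQ μ f * etaAp η μ fun ν => vdQ ν g)

/-- The bracket `{f, h̄}_{η∂_x}` of a differential polynomial with a local
functional. -/
noncomputable def pbEta (η : Matrix (Fin N) (Fin N) ℂ) (f : DP N) (h : LF N) : DP N :=
  ofCo fun m => ∑ γ : Fin N, ∑ᶠ n : ℕ,
    co (pd (Sum.inl (γ, n)) f * dx^[n] (etaAp η γ fun μ => vdQ μ h)) m

/-- A general operator `K^{γν} = Σ_j K^{γν}_j ∂_x^j` applied to a tuple of
differential polynomials. -/
noncomputable def Kap (K : Fin N → Fin N → ℕ → DP N) (γ : Fin N)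
    (g : Fin N → DP N) : DP N :=
  ∑ ν : Fin N, ofCo fun m => ∑ᶠ j : ℕ, co (K γ ν j * dx^[j] (g ν)) m

/-- The bracket `{f̄, ḡ}_K` of local functionals. -/
noncomputable def lfbK (K : Fin N → Fin N → ℕ → DP N) (f g : LF N) : LF N :=
  intg (∑ μ : Fin N, vdQ μ f * Kap K μ fun ν => vdQ ν g)

/-- The bracket `{f, h̄}_K` of a differential polynomial with a local
functional. -/
noncomputable def pbK (K : Fin N → Fin N → ℕ → DP N) (f : DP N) (h : LF N) : DP N :=
  ofCo fun m => ∑ γ : Fin N, ∑ᶠ n : ℕ,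
    co (pd (Sum.inl (γ, n)) f * dx^[n] (Kap K γ fun μ => vdQ μ h)) m

/-- Being a hamiltonian operator. -/
structure IsHamOp (K : Fin N → Fin N → ℕ → DP N) : Prop where
  finite : ∀ γ ν, ∃ J : ℕ, ∀ j, J ≤ j → K γ ν j = 0
  deg : ∀ (γ ν : Fin N) (j : ℕ), IsHomog (1 - (j : ℤ)) (K γ ν j)
  poly : ∀ γ ν j, IsDiffPoly (K γ ν j)
  antisym : ∀ f g : LF N, lfbK K f g = -lfbK K g f
  jacobi : ∀ f g h : LF N,
    lfbK K (lfbK K f g) h + lfbK K (lfbK K g h) f + lfbK K (lfbK K h f) g = 0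

/-- A hamiltonian hierarchy: a hamiltonian operator together with pairwise
commuting Hamiltonians `h̄_{β,q} ∈ Λ̂^{[0]}_N` such that `h̄_{1,0}` generates the
spatial translations. -/
structure IsHierarchy [NeZero N] (K : Fin N → Fin N → ℕ → DP N)
    (H : Fin N → ℕ → LF N) : Prop where
  ham : IsHamOp K
  mem : ∀ β q, H β q ∈ LFHomog N 0
  comm : ∀ β q γ p, lfbK K (H β q) (H γ p) = 0
  transl : ∀ α, Kap K α (fun μ => vdQ μ (H 0 0)) = uv α 1

/-- A tau-structure for a hamiltonian hierarchy.  Here `h β q` denotes the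
tau-symmetric density `h_{β,q-1}` (an index shift by one). -/
structure IsTauStructure [NeZero N] (K : Fin N → Fin N → ℕ → DP N)
    (H : Fin N → ℕ → LF N) (h : Fin N → ℕ → DP N) : Prop where
  mem : ∀ β q, IsHomog 0 (h β q) ∧ IsDiffPoly (h β q)
  casimir : ∀ β α, Kap K α (fun μ => vdQ μ (intg (h β 0))) = 0
  indep : LinearIndependent ℂ fun β : Fin N => intg (h β 0)
  nondeg : Matrix.det (Matrix.of fun α β : Fin N => co (K α β 1) 0) ≠ 0
  dens : ∀ β q, intg (h β (q + 1)) = H β q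
  tausym : ∀ α β p q, pbK K (h α p) (H β q) = pbK K (h β q) (H α p)

end DP



namespace DP
variable {N : ℕ}

lemma co_ofCo (F : (DVar N →₀ ℕ) → ℂ) (m) : co (ofCo F : DP N) m = F m := rfl

lemma co_pd (v : DVar N) (f : DP N) (m) :
    co (pd v f) m = ((m v : ℂ) + 1) * co f (m + Finsupp.single v 1) := rfl

/-- The summand appearing in the definition of `dx`. -/
noncomputable def dxT (f : DP N) (m : DVar N →₀ ℕ) : DVar N → ℂ := fun v =>
  match v with
  | Sum.inl (α, i + 1) =>
      co (pd (Sum.inl (α, i)) f) (m - Finsupp.single (Sum.inl (α, i + 1)) 1)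
  | _ => 0

lemma dxT_succ (f : DP N) (m) (α : Fin N) (i : ℕ) :
    dxT f m (Sum.inl (α, i + 1))
      = co (pd (Sum.inl (α, i)) f) (m - Finsupp.single (Sum.inl (α, i + 1)) 1) := rfl
lemma dxT_zero (f : DP N) (m) (α : Fin N) : dxT f m (Sum.inl (α, 0)) = 0 := rfl
lemma dxT_eps (f : DP N) (m) (u : Unit) : dxT f m (Sum.inr u) = 0 := rfl

lemma co_dx (f : DP N) (m) : co (dx f) m = ∑ v ∈ m.support, dxT f m v := by
  have h : co (dx f) m = ∑ v ∈ m.support,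
      (match v with
        | Sum.inl (α, i + 1) =>
            co (pd (Sum.inl (α, i)) f) (m - Finsupp.single (Sum.inl (α, i + 1)) 1)
        | _ => (0:ℂ)) := rfl
  rw [h]
  exact Finset.sum_congr rfl fun v _ => by
    rcases v with ⟨α, i⟩ | u
    · cases i <;> rfl
    · rfl

lemma co_vd (μ : Fin N) (f : DP N) (m) :
    co (vd μ f) m = ∑ᶠ i : ℕ, ((-1 : ℂ) ^ i) * co (dx^[i] (pd (Sum.inl (μ, i)) f)) m := rfl

lemma co_add (f g : DP N) (m) : co (f + g) m = co f m + co g m := map_add _ _ _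
lemma co_smul (c : ℂ) (f : DP N) (m) : co (c • f) m = c * co f m :=
  map_smul (MvPowerSeries.coeff (R := ℂ) m) c f
lemma co_zero (m) : co (0 : DP N) m = 0 := map_zero _

lemma dp_ext {f g : DP N} (h : ∀ m, co f m = co g m) : f = g := MvPowerSeries.ext h

lemma single_apply_ne {v w : DVar N} (h : w ≠ v) : (Finsupp.single v (1:ℕ)) w = 0 := by
  rw [Finsupp.single_apply, if_neg (fun hh => h hh.symm)]

lemma apply_add (a b : DVar N →₀ ℕ) (x : DVar N) : (a + b) x = a x + b x := rfl

lemma apply_sub (a b : DVar N →₀ ℕ) (x : DVar N) : (a - b) x = a x - b x :=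
  Finsupp.tsub_apply a b x

lemma pd_comm (v w : DVar N) (f : DP N) : pd v (pd w f) = pd w (pd v f) := by
  apply dp_ext; intro m
  simp only [co_pd]
  have hm : m + Finsupp.single v 1 + Finsupp.single w 1
      = m + Finsupp.single w 1 + Finsupp.single v 1 := by rw [add_right_comm]
  rw [hm]
  by_cases hvw : v = w
  · subst hvw; ring
  · have h1 : (m + Finsupp.single v 1 : DVar N →₀ ℕ) w = m w := by
      rw [apply_add, single_apply_ne (Ne.symm hvw), add_zero]
    have h2 : (m + Finsupp.single w 1 : DVar N →₀ ℕ) v = m v := by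
      rw [apply_add, single_apply_ne hvw, add_zero]
    rw [h1, h2]; ring

/-- Claim A: the generic term comparison for `v ≠ w`. -/
private lemma claimA (w : DVar N) (f : DP N) (m : DVar N →₀ ℕ) (v : DVar N)
    (hvw : v ≠ w) :
    ((m w : ℂ) + 1) * dxT f (m + Finsupp.single w 1) v = dxT (pd w f) m v := by
  rcases v with ⟨α, i⟩ | u
  · cases i with
    | zero => rw [dxT_zero, dxT_zero, mul_zero]
    | succ i =>
      have hvw' : (Sum.inl (α, i + 1) : DVar N) ≠ w := hvw
      rw [dxT_succ, dxT_succ]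
      have h1 : m + Finsupp.single w 1 - Finsupp.single (Sum.inl (α, i + 1)) 1
          = m - Finsupp.single (Sum.inl (α, i + 1)) 1 + Finsupp.single w 1 := by
        ext x
        rw [apply_sub, apply_add, apply_add, apply_sub]
        by_cases hx : x = Sum.inl (α, i + 1)
        · subst hx
          rw [single_apply_ne hvw']; omega
        · rw [single_apply_ne hx]; omega
      rw [h1]
      simp only [co_pd]
      have h2 : m - Finsupp.single (Sum.inl (α, i + 1)) 1 + Finsupp.single w 1
            + Finsupp.single (Sum.inl (α, i)) 1
          = m - Finsupp.single (Sum.inl (α, i + 1)) 1 + Finsupp.single (Sum.inl (α, i)) 1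
            + Finsupp.single w 1 := by
        rw [add_right_comm]
      rw [h2]
      by_cases hc : w = Sum.inl (α, i)
      · have hA : (m - Finsupp.single (Sum.inl (α, i + 1)) 1 + Finsupp.single w 1 : DVar N →₀ ℕ)
              (Sum.inl (α, i))
            = (m - Finsupp.single (Sum.inl (α, i + 1)) 1 : DVar N →₀ ℕ) (Sum.inl (α, i)) + 1 := by
          rw [apply_add, hc, Finsupp.single_apply, if_pos rfl]
        have hB : (m - Finsupp.single (Sum.inl (α, i + 1)) 1 + Finsupp.single (Sum.inl (α, i)) 1 : DVar N →₀ ℕ) w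
            = (m - Finsupp.single (Sum.inl (α, i + 1)) 1 : DVar N →₀ ℕ) (Sum.inl (α, i)) + 1 := by
          rw [apply_add, hc, Finsupp.single_apply, if_pos rfl]
        have ha : (m - Finsupp.single (Sum.inl (α, i + 1)) 1 : DVar N →₀ ℕ) (Sum.inl (α, i)) = m w := by
          rw [apply_sub, single_apply_ne (by simp), hc]; omega
        rw [hA, hB, ha]
      · have hA : (m - Finsupp.single (Sum.inl (α, i + 1)) 1 + Finsupp.single w 1 : DVar N →₀ ℕ)
              (Sum.inl (α, i))
            = (m - Finsupp.single (Sum.inl (α, i + 1)) 1 : DVar N →₀ ℕ) (Sum.inl (α, i)) := by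
          rw [apply_add, single_apply_ne (fun h => hc h.symm), add_zero]
        have hB : (m - Finsupp.single (Sum.inl (α, i + 1)) 1 + Finsupp.single (Sum.inl (α, i)) 1 : DVar N →₀ ℕ) w
            = m w := by
          rw [apply_add, single_apply_ne hc, add_zero, apply_sub, single_apply_ne (Ne.symm hvw')]
          omega
        rw [hA, hB]; ring
  · rw [dxT_eps, dxT_eps, mul_zero]

/-- The extra term in the commutator of `∂/∂u` and `∂_x`. -/
noncomputable def exT (f : DP N) (m : DVar N →₀ ℕ) : DVar N → ℂ := fun w =>
  match w with
  | Sum.inl (ν, j + 1) => co (pd (Sum.inl (ν, j)) f) m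
  | _ => 0

lemma pd_dx_aux (w : DVar N) (f : DP N) (m : DVar N →₀ ℕ) :
    co (pd w (dx f)) m = co (dx (pd w f)) m + exT f m w := by
  rw [co_pd, co_dx, co_dx]
  have hwS : w ∈ (m + Finsupp.single w 1).support := by
    rw [Finsupp.mem_support_iff, apply_add, Finsupp.single_apply, if_pos rfl]
    omega
  rw [← Finset.add_sum_erase _ _ hwS]
  have hES : (m + Finsupp.single w 1).support.erase w = m.support.erase w := by
    ext x
    by_cases hx : x = w
    · simp [hx]
    · simp only [Finset.mem_erase, Finsupp.mem_support_iff, apply_add,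
        single_apply_ne hx, add_zero]
  rw [hES, mul_add, Finset.mul_sum]
  rw [Finset.sum_congr rfl fun v hv => claimA w f m v (Finset.ne_of_mem_erase hv)]
  have hsplit : (∑ v ∈ m.support, dxT (pd w f) m v)
      = (if w ∈ m.support then dxT (pd w f) m w else 0)
        + ∑ v ∈ m.support.erase w, dxT (pd w f) m v := by
    by_cases hw : w ∈ m.support
    · rw [if_pos hw, Finset.add_sum_erase _ _ hw]
    · rw [if_neg hw, Finset.erase_eq_of_notMem hw, zero_add]
  rw [hsplit]
  have hkey : ((m w : ℂ) + 1) * dxT f (m + Finsupp.single w 1) w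
      = (if w ∈ m.support then dxT (pd w f) m w else 0) + exT f m w := by
    rcases w with ⟨ν, j⟩ | u
    · cases j with
      | zero =>
        rw [dxT_zero, mul_zero]
        show (0:ℂ) = (if (Sum.inl (ν,0) : DVar N) ∈ m.support then (0:ℂ) else 0) + 0
        simp
      | succ j =>
        rw [dxT_succ]
        have hms : m + Finsupp.single (Sum.inl (ν, j+1) : DVar N) 1
            - Finsupp.single (Sum.inl (ν, j+1) : DVar N) 1 = m := add_tsub_cancel_right _ _
        rw [hms]
        show ((m (Sum.inl (ν, j+1)) : ℂ) + 1) * co (pd (Sum.inl (ν, j)) f) m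
          = (if (Sum.inl (ν, j+1) : DVar N) ∈ m.support then
              co (pd (Sum.inl (ν, j)) (pd (Sum.inl (ν, j+1)) f))
                (m - Finsupp.single (Sum.inl (ν, j+1)) 1) else 0)
            + co (pd (Sum.inl (ν, j)) f) m
        have hww' : (Sum.inl (ν, j) : DVar N) ≠ Sum.inl (ν, j+1) := by simp
        by_cases hw : (Sum.inl (ν, j+1) : DVar N) ∈ m.support
        · rw [if_pos hw]
          have hmw : m (Sum.inl (ν, j+1)) ≠ 0 := Finsupp.mem_support_iff.mp hw
          rw [co_pd, co_pd, co_pd]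
          have e1 : (m - Finsupp.single (Sum.inl (ν, j+1)) 1 : DVar N →₀ ℕ) (Sum.inl (ν, j))
              = m (Sum.inl (ν, j)) := by
            rw [apply_sub, single_apply_ne hww']; omega
          have e2 : (m - Finsupp.single (Sum.inl (ν, j+1)) 1
                + Finsupp.single (Sum.inl (ν, j)) 1 : DVar N →₀ ℕ) (Sum.inl (ν, j+1))
              = m (Sum.inl (ν, j+1)) - 1 := by
            rw [apply_add, apply_sub, single_apply_ne (Ne.symm hww'),
              Finsupp.single_apply, if_pos rfl]
            omega
          have e3 : m - Finsupp.single (Sum.inl (ν, j+1)) 1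
                + Finsupp.single (Sum.inl (ν, j)) 1 + Finsupp.single (Sum.inl (ν, j+1)) 1
              = m + Finsupp.single (Sum.inl (ν, j)) 1 := by
            ext x
            rw [apply_add, apply_add, apply_add, apply_sub]
            by_cases hx1 : x = Sum.inl (ν, j+1)
            · subst hx1
              rw [Finsupp.single_apply, if_pos rfl, single_apply_ne (Ne.symm hww')]
              omega
            · rw [single_apply_ne hx1]
              omega
          rw [e1, e2, e3]
          have hc : ((m (Sum.inl (ν, j+1)) - 1 : ℕ) : ℂ)
              = ((m (Sum.inl (ν, j+1)) : ℕ) : ℂ) - 1 := by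
            rw [Nat.cast_sub (by omega)]; norm_num
          rw [hc]
          ring
        · rw [if_neg hw, zero_add]
          have hmw : m (Sum.inl (ν, j+1)) = 0 := by
            by_contra h; exact hw (Finsupp.mem_support_iff.mpr h)
          rw [hmw]
          norm_num
    · rw [dxT_eps, mul_zero]
      show (0:ℂ) = (if (Sum.inr u : DVar N) ∈ m.support then (0:ℂ) else 0) + 0
      simp
  rw [hkey]
  ring

lemma pd_dx_zero (ν : Fin N) (f : DP N) :
    pd (Sum.inl (ν, 0)) (dx f) = dx (pd (Sum.inl (ν, 0)) f) := by
  apply dp_ext; intro m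
  have h := pd_dx_aux (Sum.inl (ν, 0)) f m
  have hz : exT f m (Sum.inl (ν, 0)) = 0 := rfl
  rw [hz, add_zero] at h
  exact h

lemma pd_dx_succ (ν : Fin N) (j : ℕ) (f : DP N) :
    pd (Sum.inl (ν, j + 1)) (dx f)
      = dx (pd (Sum.inl (ν, j + 1)) f) + pd (Sum.inl (ν, j)) f := by
  apply dp_ext; intro m
  rw [co_add]
  exact pd_dx_aux (Sum.inl (ν, j + 1)) f m

end DP

namespace DP
variable {N : ℕ}

/-- Independence of a power series from the variable `v`. -/
def Indep (v : DVar N) (f : DP N) : Prop := ∀ m, m v ≠ 0 → co f m = 0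

lemma sub_single_add_single {m : DVar N →₀ ℕ} {v : DVar N} (h : m v ≠ 0) :
    m - Finsupp.single v 1 + Finsupp.single v 1 = m := by
  ext x
  rw [apply_add, apply_sub]
  by_cases hx : x = v
  · subst hx; rw [Finsupp.single_apply, if_pos rfl]; omega
  · rw [single_apply_ne hx]; omega

lemma pd_eq_zero_iff (v : DVar N) (f : DP N) : pd v f = 0 ↔ Indep v f := by
  constructor
  · intro h m hm
    have h2 := congrArg (fun g => co g (m - Finsupp.single v 1)) h
    simp only [co_zero] at h2
    rw [co_pd, sub_single_add_single hm] at h2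
    have h3 : (((m - Finsupp.single v 1 : DVar N →₀ ℕ) v : ℕ) : ℂ) + 1 ≠ 0 := by
      intro h0
      have : ((m - Finsupp.single v 1 : DVar N →₀ ℕ) v : ℕ) + 1 = 0 := by exact_mod_cast h0
      omega
    exact (mul_eq_zero.mp h2).resolve_left h3
  · intro h
    apply dp_ext; intro m
    rw [co_pd, co_zero]
    have : (m + Finsupp.single v 1 : DVar N →₀ ℕ) v ≠ 0 := by
      rw [apply_add, Finsupp.single_apply, if_pos rfl]; omega
    rw [h _ this, mul_zero]

lemma Indep.mul {v : DVar N} {f g : DP N} (hf : Indep v f) (hg : Indep v g) :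
    Indep v (f * g) := by
  intro m hm
  have h : co (f * g) m
      = ∑ p ∈ Finset.HasAntidiagonal.antidiagonal m, co f p.1 * co g p.2 := MvPowerSeries.coeff_mul m f g
  rw [h]
  apply Finset.sum_eq_zero
  intro p hp
  have hpm : p.1 + p.2 = m := Finset.HasAntidiagonal.mem_antidiagonal.mp hp
  have : p.1 v + p.2 v = m v := by rw [← apply_add, hpm]
  rcases Nat.eq_zero_or_pos (p.1 v) with h1 | h1
  · have h2 : p.2 v ≠ 0 := by omega
    rw [hg _ h2, mul_zero]
  · rw [hf _ (by omega), zero_mul]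

lemma Indep.zero (v : DVar N) : Indep v (0 : DP N) := fun m _ => co_zero m

lemma Indep.smul {v : DVar N} {f : DP N} (c : ℂ) (hf : Indep v f) : Indep v (c • f) := by
  intro m hm; rw [co_smul, hf _ hm, mul_zero]

lemma Indep.sum {v : DVar N} {ι : Type*} {s : Finset ι} {f : ι → DP N}
    (h : ∀ i ∈ s, Indep v (f i)) : Indep v (∑ i ∈ s, f i) := by
  intro m hm
  have : co (∑ i ∈ s, f i) m = ∑ i ∈ s, co (f i) m := map_sum (MvPowerSeries.coeff (R := ℂ) m) _ _
  rw [this]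
  exact Finset.sum_eq_zero fun i hi => h i hi m hm

lemma indep_dx {ν : Fin N} {f : DP N} (hf : Indep (Sum.inl (ν, 0)) f) :
    Indep (Sum.inl (ν, 0)) (dx f) := by
  intro m hm
  rw [co_dx]
  apply Finset.sum_eq_zero
  intro x hx
  rcases x with ⟨α, i⟩ | u
  · cases i with
    | zero => exact dxT_zero f m α
    | succ i =>
      rw [dxT_succ, co_pd]
      have h1 : (m - Finsupp.single (Sum.inl (α, i+1)) 1 + Finsupp.single (Sum.inl (α, i)) 1
          : DVar N →₀ ℕ) (Sum.inl (ν, 0)) ≠ 0 := by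
        rw [apply_add, apply_sub, single_apply_ne (by simp)]
        rw [Finsupp.single_apply]
        split_ifs <;> omega
      rw [hf _ h1, mul_zero]
  · exact dxT_eps f m u

lemma indep_dx_iter {ν : Fin N} {f : DP N} (hf : Indep (Sum.inl (ν, 0)) f) (n : ℕ) :
    Indep (Sum.inl (ν, 0)) (dx^[n] f) := by
  induction n with
  | zero => exact hf
  | succ n ih => rw [Function.iterate_succ_apply']; exact indep_dx ih

lemma pd_add (v : DVar N) (f g : DP N) : pd v (f + g) = pd v f + pd v g := by
  apply dp_ext; intro m
  rw [co_add, co_pd, co_pd, co_pd, co_add]; ring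

lemma dx_add (f g : DP N) : dx (f + g) = dx f + dx g := by
  apply dp_ext; intro m
  rw [co_add, co_dx, co_dx, co_dx, ← Finset.sum_add_distrib]
  refine Finset.sum_congr rfl fun x _ => ?_
  rcases x with ⟨α, i⟩ | u
  · cases i with
    | zero => rw [dxT_zero, dxT_zero, dxT_zero, add_zero]
    | succ i => rw [dxT_succ, dxT_succ, dxT_succ, pd_add, co_add]
  · rw [dxT_eps, dxT_eps, dxT_eps, add_zero]

lemma dx_iter_add (n : ℕ) (f g : DP N) : dx^[n] (f + g) = dx^[n] f + dx^[n] g := by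
  induction n generalizing f g with
  | zero => rfl
  | succ n ih => rw [Function.iterate_succ_apply, Function.iterate_succ_apply,
      Function.iterate_succ_apply, dx_add, ih]

lemma isConst_pd_inl {c : DP N} (hc : IsConst c) (p : Fin N × ℕ) :
    pd (Sum.inl p) c = 0 := by
  apply dp_ext; intro m
  rw [co_pd, co_zero]
  have h : co c (m + Finsupp.single (Sum.inl p) 1) = 0 := by
    by_contra h
    have hs : (Sum.inl p : DVar N) ∈ (m + Finsupp.single (Sum.inl p) 1).support := by
      rw [Finsupp.mem_support_iff, apply_add, Finsupp.single_apply, if_pos rfl]; omega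
    exact absurd (hc _ h _ hs) (by simp)
  rw [h, mul_zero]

lemma pd0_dx_iter (ν : Fin N) (n : ℕ) (f : DP N) :
    pd (Sum.inl (ν, 0)) (dx^[n] f) = dx^[n] (pd (Sum.inl (ν, 0)) f) := by
  induction n generalizing f with
  | zero => rfl
  | succ n ih => rw [Function.iterate_succ_apply', pd_dx_zero,
      Function.iterate_succ_apply', ih]

/-- The jet index of a variable. -/
def idx : DVar N → ℕ := fun v => match v with | Sum.inl (_, i) => i | _ => 0

/-- The total jet weight of a monomial. -/
noncomputable def tdeg (m : DVar N →₀ ℕ) : ℕ := m.sum fun v k => k * idx v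

lemma tdeg_add (a b : DVar N →₀ ℕ) : tdeg (a + b) = tdeg a + tdeg b :=
  Finsupp.sum_add_index' (fun _ => by simp) (fun _ _ _ => add_mul _ _ _)

lemma tdeg_single (v : DVar N) (n : ℕ) : tdeg (Finsupp.single v n) = n * idx v :=
  Finsupp.sum_single_index (by simp)

lemma co_dx_iter_eq_zero {k : ℕ} : ∀ {m : DVar N →₀ ℕ} (f : DP N),
    tdeg m < k → co (dx^[k] f) m = 0 := by
  induction k with
  | zero => intro m f h; omega
  | succ k ih =>
    intro m f h
    rw [Function.iterate_succ_apply', co_dx]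
    apply Finset.sum_eq_zero
    intro x hx
    rcases x with ⟨α, i⟩ | u
    · cases i with
      | zero => exact dxT_zero _ m α
      | succ i =>
        rw [dxT_succ, co_pd]
        have hmx : m (Sum.inl (α, i+1)) ≠ 0 := Finsupp.mem_support_iff.mp hx
        have hdec : m = (m - Finsupp.single (Sum.inl (α, i+1)) 1)
            + Finsupp.single (Sum.inl (α, i+1)) 1 := (sub_single_add_single hmx).symm
        have htd : tdeg (m - Finsupp.single (Sum.inl (α, i+1)) 1
              + Finsupp.single (Sum.inl (α, i)) 1) < k := by
          have h1 : tdeg m = tdeg (m - Finsupp.single (Sum.inl (α, i+1)) 1) + (i+1) := by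
            conv_lhs => rw [hdec]
            rw [tdeg_add, tdeg_single]
            simp [idx]
          rw [tdeg_add, tdeg_single]
          have : idx (Sum.inl (α, i) : DVar N) = i := rfl
          rw [this]
          omega
        rw [ih _ htd, mul_zero]
    · exact dxT_eps _ m u

lemma pd_uv (v : DVar N) (ν' : Fin N) :
    pd v (uv ν' 0) = if v = Sum.inl (ν', 0) then 1 else 0 := by
  classical
  have hX : ∀ n : DVar N →₀ ℕ, co (uv ν' 0) n
      = if n = Finsupp.single (Sum.inl (ν', 0)) 1 then 1 else 0 := fun n =>
    MvPowerSeries.coeff_X n _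
  by_cases hv : v = Sum.inl (ν', 0)
  · subst hv
    rw [if_pos rfl]
    apply dp_ext; intro m
    rw [co_pd, hX]
    by_cases hm : m = 0
    · subst hm
      rw [if_pos (by rw [zero_add])]
      have h1 : co (1 : DP N) 0 = 1 := MvPowerSeries.coeff_zero_one
      rw [h1]
      simp
    · rw [if_neg, mul_zero]
      · have h1 : co (1 : DP N) m = if m = 0 then 1 else 0 := MvPowerSeries.coeff_one m
        rw [h1, if_neg hm]
      · intro hh
        apply hm
        have := congrArg (fun x => x - Finsupp.single (Sum.inl (ν', 0) : DVar N) 1) hh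
        simpa [add_tsub_cancel_right] using this
  · rw [if_neg hv]
    apply dp_ext; intro m
    rw [co_pd, hX, co_zero, if_neg, mul_zero]
    intro hh
    have h1 : m v + (Finsupp.single v (1:ℕ)) v
        = (Finsupp.single (Sum.inl (ν', 0) : DVar N) (1:ℕ)) v := by
      rw [← apply_add, hh]
    rw [Finsupp.single_apply, if_pos rfl] at h1
    rw [single_apply_ne hv] at h1
    omega

end DP

namespace DP
variable {N : ℕ}

lemma pd_smul (v : DVar N) (c : ℂ) (f : DP N) : pd v (c • f) = c • pd v f := by
  apply dp_ext; intro m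
  rw [co_smul, co_pd, co_pd, co_smul]; ring

lemma pd_sum (v : DVar N) {ι : Type*} (s : Finset ι) (f : ι → DP N) :
    pd v (∑ i ∈ s, f i) = ∑ i ∈ s, pd v (f i) := by
  apply dp_ext; intro m
  rw [co_pd]
  have h1 : co (∑ i ∈ s, f i) (m + Finsupp.single v 1)
      = ∑ i ∈ s, co (f i) (m + Finsupp.single v 1) := map_sum (MvPowerSeries.coeff (R := ℂ) _) _ _
  have h2 : co (∑ i ∈ s, pd v (f i)) m = ∑ i ∈ s, co (pd v (f i)) m :=
    map_sum (MvPowerSeries.coeff (R := ℂ) _) _ _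
  rw [h1, h2, Finset.mul_sum]
  exact Finset.sum_congr rfl fun i _ => (co_pd v (f i) m).symm

lemma dx_smul (c : ℂ) (f : DP N) : dx (c • f) = c • dx f := by
  apply dp_ext; intro m
  rw [co_smul, co_dx, co_dx, Finset.mul_sum]
  refine Finset.sum_congr rfl fun x _ => ?_
  rcases x with ⟨α, i⟩ | u
  · cases i with
    | zero => rw [dxT_zero, dxT_zero, mul_zero]
    | succ i => rw [dxT_succ, dxT_succ, pd_smul, co_smul]
  · rw [dxT_eps, dxT_eps, mul_zero]

lemma isConst_one : IsConst (1 : DP N) := by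
  intro m hm v hv
  have h1 : co (1 : DP N) m = if m = 0 then 1 else 0 := MvPowerSeries.coeff_one m
  by_cases h : m = 0
  · subst h; simp at hv
  · rw [h1, if_neg h] at hm; exact absurd rfl hm

lemma dx_eq_zero_of_pds {f : DP N} (h : ∀ p : Fin N × ℕ, pd (Sum.inl p) f = 0) :
    dx f = 0 := by
  apply dp_ext; intro m
  rw [co_dx, co_zero]
  apply Finset.sum_eq_zero
  intro x _
  rcases x with ⟨α, i⟩ | u
  · cases i with
    | zero => exact dxT_zero f m α
    | succ i => rw [dxT_succ, h (α, i), co_zero]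
  · exact dxT_eps f m u

lemma dx_one : dx (1 : DP N) = 0 :=
  dx_eq_zero_of_pds fun p => isConst_pd_inl isConst_one p

/-- `∂/∂u^γ_0` commutes with the variational derivative. -/
lemma pd_vd (γ : Fin N) (ν : Fin N) (f : DP N) :
    pd (Sum.inl (γ, 0)) (vd ν f) = vd ν (pd (Sum.inl (γ, 0)) f) := by
  apply dp_ext; intro m
  rw [co_pd, co_vd, co_vd]
  have hs := smul_finsum ((m (Sum.inl (γ, 0)) : ℂ) + 1)
    (fun i : ℕ => ((-1 : ℂ) ^ i) * co (dx^[i] (pd (Sum.inl (ν, i)) f))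
      (m + Finsupp.single (Sum.inl (γ, 0)) 1))
  rw [smul_eq_mul] at hs
  rw [hs]
  refine finsum_congr fun i => ?_
  rw [smul_eq_mul]
  have h1 : ((m (Sum.inl (γ, 0)) : ℂ) + 1) *
        co (dx^[i] (pd (Sum.inl (ν, i)) f)) (m + Finsupp.single (Sum.inl (γ, 0)) 1)
      = co (pd (Sum.inl (γ, 0)) (dx^[i] (pd (Sum.inl (ν, i)) f))) m := (co_pd _ _ _).symm
  rw [mul_left_comm, h1, pd0_dx_iter, pd_comm]

/-- The key computation of the variational derivative of
`∑ cc ν' u^{ν'} + (const) + ∂_x r`. -/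
lemma vd_key (ν : Fin N) (cc : Fin N → ℂ) (c r : DP N) (hc : IsConst c) :
    vd ν ((∑ ν' : Fin N, cc ν' • uv ν' 0) + c + dx r) = cc ν • 1 := by
  apply dp_ext; intro m
  rw [co_vd]
  set G : DP N := (∑ ν' : Fin N, cc ν' • uv ν' 0) + c + dx r with hG
  set t : ℕ → ℂ := fun i => ((-1 : ℂ) ^ i) * co (dx^[i] (pd (Sum.inl (ν, i)) G)) m with ht
  set d : ℕ → ℂ := fun i => ((-1 : ℂ) ^ i) * co (dx^[i + 1] (pd (Sum.inl (ν, i)) r)) m with hd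
  have hsum0 : pd (Sum.inl (ν, 0) : DVar N) (∑ ν' : Fin N, cc ν' • uv ν' 0)
      = cc ν • 1 := by
    rw [pd_sum]
    have : ∀ ν' : Fin N, pd (Sum.inl (ν, 0) : DVar N) (cc ν' • uv ν' 0)
        = cc ν' • (if (Sum.inl (ν, 0) : DVar N) = Sum.inl (ν', 0) then 1 else 0) := by
      intro ν'; rw [pd_smul, pd_uv]
    rw [Finset.sum_congr rfl fun ν' _ => this ν']
    have h2 : ∀ ν' : Fin N,
        (cc ν' • if (Sum.inl (ν, 0) : DVar N) = Sum.inl (ν', 0) then (1 : DP N) else 0)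
          = if ν = ν' then cc ν' • 1 else 0 := by
      intro ν'
      by_cases h : ν = ν'
      · subst h; rw [if_pos rfl, if_pos rfl]
      · rw [if_neg (by simp [h]), if_neg h, smul_zero]
    rw [Finset.sum_congr rfl fun ν' _ => h2 ν',
      Finset.sum_ite_eq Finset.univ ν (fun ν' => cc ν' • (1 : DP N)),
      if_pos (Finset.mem_univ _)]
  have hsums : ∀ i : ℕ, pd (Sum.inl (ν, i + 1) : DVar N) (∑ ν' : Fin N, cc ν' • uv ν' 0)
      = 0 := by
    intro i
    rw [pd_sum]
    apply Finset.sum_eq_zero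
    intro ν' _
    rw [pd_smul, pd_uv, if_neg (by simp), smul_zero]
  have ht0 : t 0 = cc ν * co (1 : DP N) m + d 0 := by
    rw [ht]
    simp only [pow_zero, one_mul]
    rw [hG, pd_add, pd_add, hsum0, isConst_pd_inl hc, add_zero, pd_dx_zero]
    show co ((cc ν • 1 : DP N) + dx (pd (Sum.inl (ν, 0)) r)) m = _
    rw [co_add, co_smul, hd]
    simp only [pow_zero, one_mul, zero_add]
    rfl
  have hts : ∀ i : ℕ, t (i + 1) = d (i + 1) - d i := by
    intro i
    rw [ht, hd]
    simp only
    rw [hG, pd_add, pd_add, hsums, isConst_pd_inl hc, add_zero, zero_add, pd_dx_succ,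
      dx_iter_add, co_add]
    have h1 : dx^[i + 1] (dx (pd (Sum.inl (ν, i + 1)) r))
        = dx^[i + 2] (pd (Sum.inl (ν, i + 1)) r) := (Function.iterate_succ_apply _ _ _).symm
    rw [h1]
    ring
  have hdz : ∀ i : ℕ, tdeg m ≤ i → d i = 0 := by
    intro i hi
    rw [hd]
    simp only
    rw [co_dx_iter_eq_zero _ (by omega), mul_zero]
  have htz : ∀ i : ℕ, tdeg m + 1 ≤ i → t i = 0 := by
    intro i hi
    rcases i with _ | k
    · omega
    · rw [hts, hdz _ (by omega), hdz _ (by omega), sub_zero]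
  have hfin : ∑ᶠ i : ℕ, t i = ∑ i ∈ Finset.range (tdeg m + 1), t i := by
    apply finsum_eq_sum_of_support_subset
    intro i hi
    simp only [Function.mem_support] at hi
    simp only [Finset.coe_range, Set.mem_Iio]
    by_contra h
    exact hi (htz i (by omega))
  have hind : ∀ n : ℕ, ∑ i ∈ Finset.range (n + 1), t i = cc ν * co (1 : DP N) m + d n := by
    intro n
    induction n with
    | zero => rw [Finset.sum_range_one, ht0]
    | succ n ih => rw [Finset.sum_range_succ, ih, hts]; ring
  rw [hfin, hind, hdz _ le_rfl, add_zero, co_smul]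

end DP

namespace DP
variable {N : ℕ}

lemma co_sum {ι : Type*} (s : Finset ι) (f : ι → DP N) (m) :
    co (∑ i ∈ s, f i) m = ∑ i ∈ s, co (f i) m := map_sum (MvPowerSeries.coeff (R := ℂ) m) _ _

/-- `∂_x` as a linear map. -/
noncomputable def dxL : DP N →ₗ[ℂ] DP N where
  toFun := dx
  map_add' := dx_add
  map_smul' := fun c f => dx_smul c f

lemma mem_lfSub_decomp {x : DP N} (hx : x ∈ lfSub N) :
    ∃ c r : DP N, IsConst c ∧ x = c + dx r := by
  rcases Submodule.mem_sup.mp hx with ⟨c, hc, z, hz, hsum⟩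
  have hr : Set.range (dx : DP N → DP N) = Set.range (dxL : DP N →ₗ[ℂ] DP N) := rfl
  rw [hr, ← LinearMap.coe_range, Submodule.span_eq] at hz
  obtain ⟨r, hrr⟩ := hz
  exact ⟨c, r, hc, by rw [← hsum, ← hrr]; rfl⟩

end DP


open DP in
/-- the normal Miura shift is independent of `u^1`.  Let
`K` be a hamiltonian operator with vanishing constant term whose coefficients
do not depend on `u^1`, let `ḡ_μ` be local functionals with
`∂ḡ_μ/∂u^1 = ∫ η_{μν}u^ν dx`, and let `𝒬 ∈ Â^{[−2]}_N` be such that `∂𝒬/∂u^1`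
is a constant.  Then `𝒬^α := η^{αμ}∂_x{𝒬, ḡ_μ}_K` satisfies `∂𝒬^α/∂u^1 = 0`
for every `α`. -/
theorem statement14 (N : ℕ) [NeZero N] (η : Matrix (Fin N) (Fin N) ℂ)
    (hsym : η.IsSymm) (hnd : IsUnit η.det)
    (K : Fin N → Fin N → ℕ → DP N) (hham : IsHamOp K)
    (hK0 : ∀ μ ν, K μ ν 0 = 0)
    (hKu1 : ∀ μ ν j, pd (Sum.inl (0, 0)) (K μ ν j) = 0)
    (g : Fin N → LF N)
    (hg : ∀ μ, pdQ (Sum.inl (0, 0)) (g μ)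
      = intg (∑ ν : Fin N, η μ ν • uv ν 0))
    (Q : DP N) (hQ : IsHomog (-2) Q ∧ IsDiffPoly Q)
    (hQ1 : IsConst (pd (Sum.inl (0, 0)) Q)) :
    ∀ α : Fin N,
      pd (Sum.inl (0, 0)) (∑ μ : Fin N, η α μ • dx (pbK K Q (g μ))) = 0 := by
  intro α
  refine (pd_eq_zero_iff _ _).mpr ?_
  refine Indep.sum fun μ _ => ?_
  refine Indep.smul _ ?_
  refine indep_dx ?_
  -- the variational derivatives of `ḡ_μ` become constants after `∂/∂u^1`
  have hW : ∀ ν : Fin N, pd (Sum.inl (0, 0) : DVar N) (vdQ ν (g μ)) = η μ ν • 1 := by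
    intro ν
    show pd (Sum.inl (0, 0) : DVar N) (vd ν (rep (g μ))) = _
    rw [pd_vd]
    have hmem : pd (Sum.inl (0, 0) : DVar N) (rep (g μ))
        - (∑ ν' : Fin N, η μ ν' • uv ν' 0) ∈ lfSub N :=
      (Submodule.Quotient.eq _).mp (hg μ)
    obtain ⟨c, r, hc, hcr⟩ := mem_lfSub_decomp hmem
    have hF : pd (Sum.inl (0, 0) : DVar N) (rep (g μ))
        = (∑ ν' : Fin N, η μ ν' • uv ν' 0) + c + dx r := by
      have h1 := sub_eq_iff_eq_add.mp hcr
      rw [h1]; abel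
    rw [hF, vd_key ν (fun ν' => η μ ν') c r hc]
  have hdxW : ∀ ν : Fin N, Indep (Sum.inl (0, 0) : DVar N) (dx (vdQ ν (g μ))) := by
    intro ν
    refine (pd_eq_zero_iff _ _).mp ?_
    rw [pd_dx_zero, hW ν, dx_smul, dx_one, smul_zero]
  have hKap : ∀ γ : Fin N, Indep (Sum.inl (0, 0) : DVar N)
      (Kap K γ fun ν => vdQ ν (g μ)) := by
    intro γ m hm
    rw [Kap, co_sum]
    apply Finset.sum_eq_zero
    intro ν _
    rw [co_ofCo]
    have hterm : ∀ j : ℕ, co (K γ ν j * dx^[j] (vdQ ν (g μ))) m = 0 := by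
      intro j
      rcases j with _ | j
      · rw [hK0, zero_mul, co_zero]
      · have h1 : Indep (Sum.inl (0, 0) : DVar N) (K γ ν (j + 1)) :=
          (pd_eq_zero_iff _ _).mp (hKu1 γ ν (j + 1))
        have h2 : Indep (Sum.inl (0, 0) : DVar N) (dx^[j + 1] (vdQ ν (g μ))) := by
          rw [Function.iterate_succ_apply]
          exact indep_dx_iter (hdxW ν) j
        exact (h1.mul h2) m hm
    rw [finsum_congr hterm, finsum_zero]
  intro m hm
  rw [pbK, co_ofCo]
  apply Finset.sum_eq_zero
  intro γ _
  have hQind : ∀ n : ℕ, Indep (Sum.inl (0, 0) : DVar N) (pd (Sum.inl (γ, n)) Q) := by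
    intro n
    refine (pd_eq_zero_iff _ _).mp ?_
    rw [pd_comm]
    exact isConst_pd_inl hQ1 (γ, n)
  have hterm : ∀ n : ℕ, co (pd (Sum.inl (γ, n)) Q
      * dx^[n] (Kap K γ fun ν => vdQ ν (g μ))) m = 0 := by
    intro n
    have h2 : Indep (Sum.inl (0, 0) : DVar N)
        (dx^[n] (Kap K γ fun ν => vdQ ν (g μ))) := indep_dx_iter (hKap γ) n
    exact ((hQind n).mul h2) m hm
  rw [finsum_congr hterm, finsum_zero]
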